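/- arXiv:0707.2578 — 3 statements merged into one kernel-verified Lean document; each statement's English description precedes it below -/
import Mathlib

section
/- Let $\mu$ be a measure of compact support in $\mathbb{C}$, let $M_z$ be multiplication by $z$ on $L^2(\mathbb{C}, d\mu)$, and let $Q_n$ be the orthogonal projection onto polynomials of degree at most $n$. Then for every $\ell \geq 1$, the operator $Q_n M_z^\ell Q_n - (Q_n M_z Q_n)^\ell$ has rank at most $\ell$ and operator norm at most $2 N(\mu)^\ell$, where $N(\mu) = \sup\{|z| : z \in \mathrm{supp}(\mu)\}$. -/
open MeasureTheory Polynomial Filter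

noncomputable section

/-- The (topological) support of a measure on `ℂ`. -/
def msupport (μ : Measure ℂ) : Set ℂ := {z | ∀ U ∈ nhds z, 0 < μ U}

/-- `N(μ) = sup {|z| : z ∈ supp μ}`. -/
def Nmu (μ : Measure ℂ) : ℝ := sSup ((fun z => ‖z‖) '' msupport μ)

lemma ae_mem_msupport (μ : Measure ℂ) : ∀ᵐ z ∂μ, z ∈ msupport μ := by
  rw [ae_iff]
  apply measure_null_of_locally_null
  intro x hx
  simp only [Set.mem_setOf_eq, msupport, not_forall] at hx
  obtain ⟨U, hU, hU0⟩ := hx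
  exact ⟨U, nhdsWithin_le_nhds hU, by simpa using hU0⟩

lemma norm_le_Nmu (μ : Measure ℂ) (hcomp : IsCompact (msupport μ)) {z : ℂ}
    (hz : z ∈ msupport μ) : ‖z‖ ≤ Nmu μ :=
  le_csSup (hcomp.image continuous_norm).bddAbove ⟨z, hz, rfl⟩

lemma Nmu_nonneg (μ : Measure ℂ) (hcomp : IsCompact (msupport μ))
    (hne : (msupport μ).Nonempty) : 0 ≤ Nmu μ := by
  obtain ⟨z, hz⟩ := hne
  exact le_trans (norm_nonneg z) (norm_le_Nmu μ hcomp hz)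

lemma ae_norm_le (μ : Measure ℂ) (hcomp : IsCompact (msupport μ)) :
    ∀ᵐ z ∂μ, ‖z‖ ≤ Nmu μ := by
  filter_upwards [ae_mem_msupport μ] with z hz using norm_le_Nmu μ hcomp hz

lemma memLp_monomial (μ : Measure ℂ) [IsFiniteMeasure μ]
    (hcomp : IsCompact (msupport μ)) (k : ℕ) :
    MemLp (fun z : ℂ => z ^ k) 2 μ := by
  apply MemLp.of_bound (continuous_pow k).aestronglyMeasurable (Nmu μ ^ k)
  filter_upwards [ae_norm_le μ hcomp] with z hz
  calc ‖z ^ k‖ = ‖z‖ ^ k := norm_pow z k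
    _ ≤ Nmu μ ^ k := pow_le_pow_left₀ (norm_nonneg z) hz k

lemma Mnorm (μ : Measure ℂ) [IsFiniteMeasure μ] (hcomp : IsCompact (msupport μ))
    (hne : (msupport μ).Nonempty)
    (M : Lp ℂ 2 μ →L[ℂ] Lp ℂ 2 μ)
    (hM : ∀ f : Lp ℂ 2 μ, (M f : ℂ → ℂ) =ᵐ[μ] fun z => z * f z) :
    ‖M‖ ≤ Nmu μ := by
  refine ContinuousLinearMap.opNorm_le_bound M (Nmu_nonneg μ hcomp hne) fun f => ?_
  have h1 : ∀ᵐ z ∂μ, ‖(M f : ℂ → ℂ) z‖ ≤ ‖(((Nmu μ : ℂ)) • f : Lp ℂ 2 μ) z‖ := by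
    filter_upwards [hM f, ae_norm_le μ hcomp, Lp.coeFn_smul (Nmu μ : ℂ) f] with z h1 h2 h3
    rw [h1, h3]
    simp only [Pi.smul_apply, smul_eq_mul, norm_mul, Complex.norm_real]
    rw [Real.norm_of_nonneg (Nmu_nonneg μ hcomp hne)]
    exact mul_le_mul_of_nonneg_right h2 (norm_nonneg _)
  calc ‖M f‖ = (eLpNorm (M f) 2 μ).toReal := Lp.norm_def _
    _ ≤ (eLpNorm (((Nmu μ : ℂ)) • f : Lp ℂ 2 μ) 2 μ).toReal :=
        ENNReal.toReal_mono (Lp.eLpNorm_ne_top _) (eLpNorm_mono_ae h1)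
    _ = ‖((Nmu μ : ℂ)) • f‖ := (Lp.norm_def _).symm
    _ = Nmu μ * ‖f‖ := by
        rw [norm_smul, Complex.norm_real, Real.norm_of_nonneg (Nmu_nonneg μ hcomp hne)]

lemma Qnorm {E : Type*} [NormedAddCommGroup E] [InnerProductSpace ℂ E]
    (Q : E →L[ℂ] E) (hidem : ∀ f, Q (Q f) = Q f)
    (hQ3 : ∀ f g : E, @inner ℂ _ _ (Q f) g = @inner ℂ _ _ f (Q g)) : ‖Q‖ ≤ 1 := by
  refine ContinuousLinearMap.opNorm_le_bound Q zero_le_one fun f => ?_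
  rw [one_mul]
  have h : @inner ℂ _ _ (Q f) (Q f) = @inner ℂ _ _ f (Q f) := by
    rw [hQ3 f (Q f), hidem]
  have h2 : (‖Q f‖ : ℝ) ^ 2 = ‖@inner ℂ _ _ f (Q f)‖ := by
    rw [← h, inner_self_eq_norm_sq_to_K]
    simp
  have h3 : ‖@inner ℂ _ _ f (Q f)‖ ≤ ‖f‖ * ‖Q f‖ := norm_inner_le_norm f (Q f)
  nlinarith [norm_nonneg (Q f), norm_nonneg f]

lemma coeFn_finsetSum {α : Type*} [MeasurableSpace α] (μ : Measure α) {ι : Type*}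
    (s : Finset ι) (c : ι → ℂ) (F : ι → Lp ℂ 2 μ) :
    ((∑ i ∈ s, c i • F i : Lp ℂ 2 μ) : α → ℂ) =ᵐ[μ]
      fun z => ∑ i ∈ s, c i * (F i : α → ℂ) z := by
  classical
  induction s using Finset.induction_on with
  | empty => simp only [Finset.sum_empty]; exact Lp.coeFn_zero (E := ℂ) (p := 2) (μ := μ)
  | insert a s' hx ih =>
    rw [Finset.sum_insert hx]
    filter_upwards [Lp.coeFn_add (c a • F a) (∑ i ∈ s', c i • F i),
      Lp.coeFn_smul (c a) (F a), ih] with z h1 h2 h3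
    rw [h1]
    simp only [Pi.add_apply, h2, h3, Finset.sum_insert hx, Pi.smul_apply, smul_eq_mul]


/-- Proposition 2.1: `Qₙ M_z^ℓ Qₙ - (Qₙ M_z Qₙ)^ℓ` has rank at most `ℓ` and
norm at most `2 N(μ)^ℓ`. -/
theorem stmt0 (μ : Measure ℂ) [IsFiniteMeasure μ]
    (hcomp : IsCompact (msupport μ)) (hinf : (msupport μ).Infinite)
    (n ℓ : ℕ) (hℓ : 1 ≤ ℓ)
    (M : Lp ℂ 2 μ →L[ℂ] Lp ℂ 2 μ)
    (hM : ∀ f : Lp ℂ 2 μ, (M f : ℂ → ℂ) =ᵐ[μ] fun z => z * f z)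
    (S : Submodule ℂ (Lp ℂ 2 μ))
    (hS : S = Submodule.span ℂ
      {f : Lp ℂ 2 μ | ∃ p : Polynomial ℂ, p.natDegree ≤ n ∧
        (f : ℂ → ℂ) =ᵐ[μ] fun z => p.eval z})
    (Q : Lp ℂ 2 μ →L[ℂ] Lp ℂ 2 μ)
    (hQ1 : ∀ f ∈ S, Q f = f) (hQ2 : ∀ f, Q f ∈ S)
    (hQ3 : ∀ f g : Lp ℂ 2 μ, @inner ℂ _ _ (Q f) g = @inner ℂ _ _ f (Q g)) :
    LinearMap.rank (Q ∘L (M ^ ℓ : Lp ℂ 2 μ →L[ℂ] Lp ℂ 2 μ) ∘L Q - (Q ∘L M ∘L Q) ^ ℓ).toLinearMap ≤ ℓ ∧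
      ‖Q ∘L (M ^ ℓ : Lp ℂ 2 μ →L[ℂ] Lp ℂ 2 μ) ∘L Q - (Q ∘L M ∘L Q) ^ ℓ‖ ≤ 2 * Nmu μ ^ ℓ := by
  classical
  have hne : (msupport μ).Nonempty := hinf.nonempty
  have h0 : (0:ℝ) ≤ Nmu μ := Nmu_nonneg μ hcomp hne
  set A : Lp ℂ 2 μ →L[ℂ] Lp ℂ 2 μ :=
    Q ∘L (M ^ ℓ : Lp ℂ 2 μ →L[ℂ] Lp ℂ 2 μ) ∘L Q - (Q ∘L M ∘L Q) ^ ℓ with hA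
  have hg : ∀ k : ℕ, MemLp (fun z : ℂ => z ^ k) 2 μ := memLp_monomial μ hcomp
  set g : ℕ → Lp ℂ 2 μ := fun k => (hg k).toLp _ with hgdef
  have hgk : ∀ k, (g k : ℂ → ℂ) =ᵐ[μ] fun z => z ^ k := fun k => (hg k).coeFn_toLp
  have hMg : ∀ k, M (g k) = g (k + 1) := by
    intro k
    apply Lp.ext
    filter_upwards [hM (g k), hgk k, hgk (k + 1)] with z h1 h2 h3
    rw [h1, h3, h2, pow_succ]
    ring
  have hMpow : ∀ j k, (M ^ j) (g k) = g (k + j) := by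
    intro j
    induction j with
    | zero => intro k; simp
    | succ j ih =>
      intro k
      rw [pow_succ, ContinuousLinearMap.mul_apply, hMg k, ih (k + 1)]
      congr 1
      omega
  have hgS : ∀ k, k ≤ n → g k ∈ S := by
    intro k hk
    rw [hS]
    apply Submodule.subset_span
    refine ⟨X ^ k, by simpa using hk, ?_⟩
    filter_upwards [hgk k] with z h
    rw [h]; simp
  have hQQ : ∀ f, Q (Q f) = Q f := fun f => hQ1 _ (hQ2 f)
  have hQg : ∀ k, k ≤ n → Q (g k) = g k := fun k hk => hQ1 _ (hgS k hk)
  have hBapp : ∀ k, k + 1 ≤ n → (Q ∘L M ∘L Q) (g k) = g (k + 1) := by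
    intro k hk
    rw [ContinuousLinearMap.comp_apply, ContinuousLinearMap.comp_apply,
      hQg k (by omega), hMg k, hQg (k + 1) hk]
  have hBpow : ∀ j k, k + j ≤ n → ((Q ∘L M ∘L Q) ^ j) (g k) = g (k + j) := by
    intro j
    induction j with
    | zero => intro k _; simp
    | succ j ih =>
      intro k hk
      rw [pow_succ, ContinuousLinearMap.mul_apply, hBapp k (by omega), ih (k + 1) (by omega)]
      congr 1
      omega
  have hA0 : ∀ k, k + ℓ ≤ n → A (g k) = 0 := by
    intro k hk
    rw [hA, ContinuousLinearMap.sub_apply, ContinuousLinearMap.comp_apply,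
      ContinuousLinearMap.comp_apply, hQg k (by omega), hMpow ℓ k,
      hQg (k + ℓ) hk, hBpow ℓ k hk, sub_self]
  have hAQ : ∀ f, A f = A (Q f) := by
    intro f
    obtain ⟨m, rfl⟩ : ∃ m, ℓ = m + 1 := ⟨ℓ - 1, by omega⟩
    rw [hA, ContinuousLinearMap.sub_apply, ContinuousLinearMap.sub_apply]
    congr 1
    · simp only [ContinuousLinearMap.comp_apply, hQQ]
    · rw [pow_succ, ContinuousLinearMap.mul_apply, ContinuousLinearMap.mul_apply]
      congr 1
      simp only [ContinuousLinearMap.comp_apply, hQQ]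
  have hSle : S ≤ Submodule.span ℂ (g '' {k | k ≤ n}) := by
    rw [hS]
    apply Submodule.span_le.mpr
    rintro f ⟨p, hp, hf⟩
    have hall : ∀ᵐ z ∂μ, ∀ k ∈ Finset.range (n + 1), (g k : ℂ → ℂ) z = z ^ k := by
      rw [eventually_all_finset]
      intro k _
      exact hgk k
    have hfeq : f = ∑ k ∈ Finset.range (n + 1), p.coeff k • g k := by
      apply Lp.ext
      filter_upwards [hf, coeFn_finsetSum μ (Finset.range (n + 1)) (fun k => p.coeff k) g,
        hall] with z h1 h2 h3
      rw [h1, h2]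
      rw [eval_eq_sum_range' (by omega : p.natDegree < n + 1) z]
      exact Finset.sum_congr rfl fun k hk => by rw [h3 k hk]
    rw [hfeq]
    exact Submodule.sum_mem _ fun k hk => Submodule.smul_mem _ _
      (Submodule.subset_span ⟨k, by simpa using Nat.lt_succ_iff.mp (Finset.mem_range.mp hk), rfl⟩)
  set t : Finset ℕ := (Finset.range (n + 1)).filter (fun k => n < k + ℓ) with ht
  have htcard : t.card ≤ ℓ := by
    have hsub : t ⊆ (Finset.range ℓ).image (fun i => n + 1 - ℓ + i) := by
      intro k hk
      rw [ht, Finset.mem_filter, Finset.mem_range] at hk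
      rw [Finset.mem_image]
      exact ⟨k - (n + 1 - ℓ), Finset.mem_range.mpr (by omega), by omega⟩
    calc t.card ≤ _ := Finset.card_le_card hsub
      _ ≤ (Finset.range ℓ).card := Finset.card_image_le
      _ = ℓ := Finset.card_range ℓ
  have hrange : LinearMap.range A.toLinearMap ≤
      Submodule.span ℂ ((fun k => A (g k)) '' ↑t) := by
    rintro x ⟨f, rfl⟩
    show A f ∈ _
    rw [hAQ f]
    have h1 : Q f ∈ Submodule.span ℂ (g '' {k | k ≤ n}) := hSle (hQ2 f)
    have h2 : A (Q f) ∈ Submodule.map A.toLinearMap (Submodule.span ℂ (g '' {k | k ≤ n})) :=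
      ⟨Q f, h1, rfl⟩
    rw [Submodule.map_span] at h2
    refine Submodule.span_le.mpr ?_ h2
    rintro y ⟨y', ⟨k, hk, rfl⟩, rfl⟩
    by_cases hkl : n < k + ℓ
    · have hk' : k ≤ n := hk
      have hkt : k ∈ t := by
        rw [ht]; exact Finset.mem_filter.mpr ⟨Finset.mem_range.mpr (by omega), hkl⟩
      exact Submodule.subset_span ⟨k, Finset.mem_coe.mpr hkt, rfl⟩
    · show A (g k) ∈ _
      rw [hA0 k (by omega)]
      exact Submodule.zero_mem _
  constructor
  · calc LinearMap.rank A.toLinearMap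
        ≤ Module.rank ℂ (Submodule.span ℂ ((fun k => A (g k)) '' ↑t)) :=
          Submodule.rank_mono hrange
      _ = Module.rank ℂ (Submodule.span ℂ ((t.image (fun k => A (g k)) : Finset (Lp ℂ 2 μ)) : Set (Lp ℂ 2 μ))) := by
          rw [Finset.coe_image]
      _ ≤ (t.image (fun k => A (g k))).card := rank_span_finset_le _
      _ ≤ (t.card : Cardinal) := Nat.cast_le.mpr Finset.card_image_le
      _ ≤ (ℓ : Cardinal) := Nat.cast_le.mpr htcard
  · have hQn : ‖Q‖ ≤ 1 := Qnorm Q hQQ hQ3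
    have hMn : ‖M‖ ≤ Nmu μ := Mnorm μ hcomp hne M hM
    have hl0 : (0:ℝ) ≤ Nmu μ ^ ℓ := pow_nonneg h0 ℓ
    set Ml : Lp ℂ 2 μ →L[ℂ] Lp ℂ 2 μ := (M ^ ℓ : Lp ℂ 2 μ →L[ℂ] Lp ℂ 2 μ) with hMldef
    have hMl : ‖Ml‖ ≤ Nmu μ ^ ℓ := by
      rw [hMldef]
      exact le_trans (norm_pow_le' M (by omega)) (pow_le_pow_left₀ (norm_nonneg M) hMn ℓ)
    set B : Lp ℂ 2 μ →L[ℂ] Lp ℂ 2 μ := Q ∘L M ∘L Q with hBdef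
    have hB1 : ‖B‖ ≤ Nmu μ := by
      have c2 : ‖M ∘L Q‖ ≤ Nmu μ * 1 :=
        le_trans (ContinuousLinearMap.opNorm_comp_le M Q)
          (mul_le_mul hMn hQn (norm_nonneg Q) h0)
      calc ‖B‖ ≤ ‖Q‖ * ‖M ∘L Q‖ := ContinuousLinearMap.opNorm_comp_le _ _
        _ ≤ 1 * (Nmu μ * 1) := mul_le_mul hQn c2 (norm_nonneg _) zero_le_one
        _ = Nmu μ := by ring
    have h1 : ‖Q ∘L Ml ∘L Q‖ ≤ Nmu μ ^ ℓ := by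
      have c2 : ‖Ml ∘L Q‖ ≤ Nmu μ ^ ℓ * 1 :=
        le_trans (ContinuousLinearMap.opNorm_comp_le Ml Q)
          (mul_le_mul hMl hQn (norm_nonneg Q) hl0)
      calc ‖Q ∘L Ml ∘L Q‖ ≤ ‖Q‖ * ‖Ml ∘L Q‖ := ContinuousLinearMap.opNorm_comp_le _ _
        _ ≤ 1 * (Nmu μ ^ ℓ * 1) := mul_le_mul hQn c2 (norm_nonneg _) zero_le_one
        _ = Nmu μ ^ ℓ := by ring
    have h2 : ‖B ^ ℓ‖ ≤ Nmu μ ^ ℓ :=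
      le_trans (norm_pow_le' B (by omega)) (pow_le_pow_left₀ (norm_nonneg B) hB1 ℓ)
    calc ‖A‖ = ‖Q ∘L Ml ∘L Q - B ^ ℓ‖ := by rw [hA]
      _ ≤ ‖Q ∘L Ml ∘L Q‖ + ‖B ^ ℓ‖ := norm_sub_le _ _
      _ ≤ Nmu μ ^ ℓ + Nmu μ ^ ℓ := add_le_add h1 h2
      _ = 2 * Nmu μ ^ ℓ := by ring
end
end

section
/- Let $\mu$ be a measure on $\mathbb{C}$ of compact, infinite support, let $X_{n+1}(z, d\mu)$ be the monic orthogonal polynomial of degree $n+1$ for $\mu$, and let $M_z^{(n)} = Q_n M_z Q_n$ act on the range of $Q_n$ (polynomials of degree at most $n$). Then for all $w \in \mathbb{C}$, $\det(w - M_z^{(n)}) = X_{n+1}(w, d\mu)$, where the determinant is taken on the $(n+1)$-dimensional space $\mathrm{ran}(Q_n)$. -/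
open MeasureTheory Polynomial Filter

noncomputable section

set_option synthInstance.maxHeartbeats 1000000 in
set_option maxHeartbeats 2000000 in
/-- Proposition 2.2(i): `det_{ran Qₙ}(w - Qₙ M_z Qₙ) = X_{n+1}(w, dμ)`, where `X_{n+1}`
is the monic orthogonal polynomial of degree `n+1`. -/
theorem stmt1 (μ : Measure ℂ) [IsFiniteMeasure μ]
    (hcomp : IsCompact (msupport μ)) (hinf : (msupport μ).Infinite)
    (n : ℕ)
    (M : Lp ℂ 2 μ →L[ℂ] Lp ℂ 2 μ)
    (hM : ∀ f : Lp ℂ 2 μ, (M f : ℂ → ℂ) =ᵐ[μ] fun z => z * f z)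
    (S : Submodule ℂ (Lp ℂ 2 μ))
    (hS : S = Submodule.span ℂ
      {f : Lp ℂ 2 μ | ∃ p : Polynomial ℂ, p.natDegree ≤ n ∧
        (f : ℂ → ℂ) =ᵐ[μ] fun z => p.eval z})
    (hfin : Module.finrank ℂ S = n + 1)
    (Q : Lp ℂ 2 μ →L[ℂ] Lp ℂ 2 μ)
    (hQ1 : ∀ f ∈ S, Q f = f) (hQ2 : ∀ f, Q f ∈ S)
    (hQ3 : ∀ f g : Lp ℂ 2 μ, @inner ℂ _ _ (Q f) g = @inner ℂ _ _ f (Q g))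
    (T : S →ₗ[ℂ] S) (hT : ∀ f : S, (T f : Lp ℂ 2 μ) = Q (M f))
    (X : Polynomial ℂ) (hXmonic : X.Monic) (hXdeg : X.natDegree = n + 1)
    (hXorth : ∀ q : Polynomial ℂ, q.natDegree ≤ n →
      ∫ z, (starRingEnd ℂ) (q.eval z) * X.eval z ∂μ = 0) :
    ∀ w : ℂ, LinearMap.det ((w • (LinearMap.id : S →ₗ[ℂ] S)) - T) = X.eval w := by
  classical
  -- measure is null outside the support
  have hnull : μ (msupport μ)ᶜ = 0 := by
    set Sop : Set (Set ℂ) := {U | IsOpen U ∧ μ U = 0} with hSop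
    obtain ⟨Tc, hTc, hTS, hTeq⟩ := TopologicalSpace.isOpen_sUnion_countable Sop (fun s hs => hs.1)
    have h0 : μ (⋃₀ Sop) = 0 := by
      rw [← hTeq]
      exact (measure_sUnion_null_iff hTc).2 fun s hs => (hTS hs).2
    refine measure_mono_null ?_ h0
    intro z hz
    simp only [msupport, Set.mem_compl_iff, Set.mem_setOf_eq, not_forall] at hz
    obtain ⟨U, hU, hUz⟩ := hz
    obtain ⟨V, hVU, hVo, hzV⟩ := mem_nhds_iff.mp hU
    exact ⟨V, ⟨hVo, measure_mono_null hVU (by simpa using hUz)⟩, hzV⟩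
  -- polynomials are in L²
  have hmem : ∀ p : Polynomial ℂ, MemLp (fun z => p.eval z) 2 μ := by
    intro p
    obtain ⟨C, hC⟩ := hcomp.exists_bound_of_continuousOn (p.continuous.continuousOn)
    refine MemLp.of_bound p.continuous.aestronglyMeasurable C ?_
    have : ∀ᵐ z ∂μ, z ∈ msupport μ := by rw [ae_iff]; exact hnull
    filter_upwards [this] with z hz using by simpa using hC z hz
  set ℓ : Polynomial ℂ → Lp ℂ 2 μ := fun p => (hmem p).toLp _ with hℓdef
  have hℓ : ∀ p, (ℓ p : ℂ → ℂ) =ᵐ[μ] fun z => p.eval z := fun p => (hmem p).coeFn_toLp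
  have hℓeq : ∀ (p : Polynomial ℂ) (f : Lp ℂ 2 μ),
      ((f : ℂ → ℂ) =ᵐ[μ] fun z => p.eval z) → f = ℓ p :=
    fun p f h => Lp.ext (h.trans (hℓ p).symm)
  set E : ℕ → Lp ℂ 2 μ := fun i => ℓ (Polynomial.X ^ i) with hEdef
  have hcoe : ∀ (m : ℕ) (c : ℕ → ℂ),
      ((∑ i ∈ Finset.range m, c i • E i : Lp ℂ 2 μ) : ℂ → ℂ)
        =ᵐ[μ] fun z => ∑ i ∈ Finset.range m, c i * z ^ i := by
    intro m c
    induction m with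
    | zero => simp only [Finset.range_zero, Finset.sum_empty]; exact Lp.coeFn_zero ℂ 2 μ
    | succ m ih =>
        rw [Finset.sum_range_succ]
        filter_upwards [Lp.coeFn_add (∑ i ∈ Finset.range m, c i • E i) (c m • E m), ih,
          Lp.coeFn_smul (c m) (E m), hℓ (Polynomial.X ^ m)] with z h1 h2 h3 h4
        rw [h1, Finset.sum_range_succ]
        simp only [Pi.add_apply, h2, h3, Pi.smul_apply, smul_eq_mul]
        rw [h4]; simp
  have hsum : ∀ (m : ℕ) (p : Polynomial ℂ), p.natDegree ≤ m →
      ℓ p = ∑ i ∈ Finset.range (m + 1), p.coeff i • E i := by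
    intro m p hp
    refine (hℓeq p _ ?_).symm
    refine (hcoe (m+1) p.coeff).trans (Eventually.of_forall fun z => ?_)
    exact (eval_eq_sum_range' (Nat.lt_succ_of_le hp) z).symm
  -- membership of polynomials of degree ≤ n in S
  have hgen : ∀ p : Polynomial ℂ, p.natDegree ≤ n → ℓ p ∈ S := by
    intro p hp
    rw [hS]
    exact Submodule.subset_span ⟨p, hp, hℓ p⟩
  have hE_mem : ∀ i, i ≤ n → E i ∈ S := by
    intro i hi
    exact hgen (Polynomial.X ^ i) (by simpa [natDegree_X_pow] using hi)
  -- the basis of monomials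
  set e : Fin (n + 1) → S := fun i => ⟨E i, hE_mem i (Nat.lt_succ_iff.mp i.2)⟩ with hedef
  have le_span : ⊤ ≤ Submodule.span ℂ (Set.range e) := by
    intro v _
    have h1 : {f : Lp ℂ 2 μ | ∃ p : Polynomial ℂ, p.natDegree ≤ n ∧
        (f : ℂ → ℂ) =ᵐ[μ] fun z => p.eval z} ⊆
        (Submodule.span ℂ (Set.range fun i : Fin (n+1) => E i) : Set (Lp ℂ 2 μ)) := by
      rintro f ⟨p, hp, hf⟩
      rw [hℓeq p f hf, hsum n p hp]
      exact Submodule.sum_mem _ fun i hi => Submodule.smul_mem _ _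
        (Submodule.subset_span ⟨⟨i, Finset.mem_range.mp hi⟩, rfl⟩)
    have h2 : S ≤ Submodule.span ℂ (Set.range fun i : Fin (n+1) => E i) := by
      rw [hS]; exact Submodule.span_le.2 h1
    have h3 : Submodule.span ℂ (Set.range fun i : Fin (n+1) => E i) =
        Submodule.map S.subtype (Submodule.span ℂ (Set.range e)) := by
      rw [Submodule.map_span]
      congr 1
      ext f
      constructor
      · rintro ⟨i, rfl⟩; exact ⟨e i, ⟨i, rfl⟩, rfl⟩
      · rintro ⟨g, ⟨i, rfl⟩, rfl⟩; exact ⟨i, rfl⟩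
    have h4 := h2 v.2
    rw [h3] at h4
    obtain ⟨w, hw, hww⟩ := h4
    have : w = v := Subtype.ext hww
    exact this ▸ hw
  have card_eq : Fintype.card (Fin (n + 1)) = Module.finrank ℂ S := by simp [hfin]
  set b : Module.Basis (Fin (n + 1)) ℂ S := basisOfTopLeSpanOfCardEqFinrank e le_span card_eq with hbdef
  have hbe : ⇑b = e := coe_basisOfTopLeSpanOfCardEqFinrank e le_span card_eq
  haveI : FiniteDimensional ℂ S := FiniteDimensional.of_finrank_eq_succ hfin
  -- Q kills ℓ X
  have hQX : Q (ℓ X) = 0 := by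
    have horth : ∀ g ∈ S, (inner ℂ (ℓ X) g : ℂ) = 0 := by
      intro g hg
      rw [hS] at hg
      induction hg using Submodule.span_induction with
      | mem f hf =>
          obtain ⟨q, hq, hfq⟩ := hf
          rw [MeasureTheory.L2.inner_def]
          simp only [RCLike.inner_apply']
          have : ∫ z, (starRingEnd ℂ) ((ℓ X : ℂ → ℂ) z) * (f : ℂ → ℂ) z ∂μ
              = ∫ z, (starRingEnd ℂ) (X.eval z) * q.eval z ∂μ := by
            refine integral_congr_ae ?_
            filter_upwards [hℓ X, hfq] with z h1 h2
            rw [h1, h2]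
          rw [this]
          have h5 : (fun z => (starRingEnd ℂ) (X.eval z) * q.eval z)
              = fun z => (starRingEnd ℂ) ((starRingEnd ℂ) (q.eval z) * X.eval z) := by
            funext z; rw [map_mul, RingHomCompTriple.comp_apply]
            simp [mul_comm]
          rw [h5, integral_conj, hXorth q hq, map_zero]
      | zero => exact inner_zero_right _
      | add f g _ _ hf hg => rw [inner_add_right, hf, hg, add_zero]
      | smul c f _ hf => rw [inner_smul_right, hf, mul_zero]
    have h6 : (inner ℂ (Q (ℓ X)) (Q (ℓ X)) : ℂ) = 0 := by
      rw [hQ3, hQ1 _ (hQ2 (ℓ X))]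
      exact horth _ (hQ2 (ℓ X))
    exact inner_self_eq_zero.mp h6
  -- multiplication shifts monomials
  have hMstep : ∀ i : ℕ, M (E i) = E (i + 1) := by
    intro i
    refine hℓeq (Polynomial.X ^ (i+1)) _ ?_
    filter_upwards [hM (E i), hℓ (Polynomial.X ^ i)] with z h1 h2
    rw [h1, h2]; simp [pow_succ, mul_comm]
  -- powers of T on e 0
  have hpow : ∀ i, i ≤ n → ((T ^ i) (e ⟨0, Nat.succ_pos n⟩) : Lp ℂ 2 μ) = E i := by
    intro i
    induction i with
    | zero => intro _; simp [hedef]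
    | succ i ih =>
        intro hi
        have hii : i ≤ n := Nat.le_of_succ_le hi
        have h1 : (T ^ (i+1)) (e ⟨0, Nat.succ_pos n⟩)
            = T ((T ^ i) (e ⟨0, Nat.succ_pos n⟩)) := by
          rw [pow_succ']; rfl
        rw [h1, hT]
        have h2 : ((T ^ i) (e ⟨0, Nat.succ_pos n⟩) : Lp ℂ 2 μ) = E i := ih hii
        rw [h2, hMstep i]
        exact hQ1 _ (hE_mem (i+1) hi)
  -- the key relation on the top power
  have hTn : (T (e ⟨n, Nat.lt_succ_self n⟩) : Lp ℂ 2 μ)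
      = -(∑ i ∈ Finset.range (n + 1), X.coeff i • E i) := by
    set r : Polynomial ℂ := X - Polynomial.X ^ (n + 1) with hrdef
    have hr : r.natDegree ≤ n := by
      rw [Polynomial.natDegree_le_iff_coeff_eq_zero]
      intro m hm
      have h1 : X.coeff (n + 1) = 1 := by rw [← hXdeg]; exact hXmonic.coeff_natDegree
      rw [hrdef, coeff_sub, coeff_X_pow]
      rcases eq_or_lt_of_le (Nat.succ_le_of_lt hm) with h | h
      · rw [← h]
        simp [Nat.succ_eq_add_one, h1]
      · rw [if_neg (by omega), coeff_eq_zero_of_natDegree_lt (by omega : X.natDegree < m)]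
        simp
    have hsplit : E (n + 1) = ℓ X - ℓ r := by
      refine (hℓeq (Polynomial.X ^ (n+1)) _ ?_).symm
      filter_upwards [Lp.coeFn_sub (ℓ X) (ℓ r), hℓ X, hℓ r] with z h1 h2 h3
      rw [h1, Pi.sub_apply, h2, h3, hrdef]
      simp [Polynomial.eval_sub]
    rw [hT, hMstep n, hsplit, map_sub, hQX, hQ1 _ (hgen r hr), zero_sub]
    congr 1
    rw [hsum n r hr]
    refine Finset.sum_congr rfl fun i hi => ?_
    have hi' : i < n + 1 := Finset.mem_range.mp hi
    rw [hrdef, coeff_sub, coeff_X_pow, if_neg (by omega)]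
    ring_nf
  -- aeval of X at T kills e 0
  have haevalX : (aeval T X) (e ⟨0, Nat.succ_pos n⟩) = 0 := by
    have hd : X.natDegree < n + 2 := by omega
    rw [aeval_eq_sum_range' hd]
    rw [LinearMap.sum_apply]
    simp only [LinearMap.smul_apply]
    rw [Finset.sum_range_succ]
    have hc1 : X.coeff (n + 1) = 1 := by
      rw [← hXdeg]; exact hXmonic.coeff_natDegree
    have hTn1 : ((T ^ (n+1)) (e ⟨0, Nat.succ_pos n⟩) : Lp ℂ 2 μ)
        = -(∑ i ∈ Finset.range (n + 1), X.coeff i • E i) := by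
      have h1 : (T ^ (n+1)) (e ⟨0, Nat.succ_pos n⟩)
          = T ((T ^ n) (e ⟨0, Nat.succ_pos n⟩)) := by rw [pow_succ']; rfl
      have h2 : (T ^ n) (e ⟨0, Nat.succ_pos n⟩) = e ⟨n, Nat.lt_succ_self n⟩ := by
        apply Subtype.ext
        rw [hpow n le_rfl]
      rw [h1, h2, hTn]
    have h3 : ∀ i ∈ Finset.range (n + 1),
        ((X.coeff i • (T ^ i) (e ⟨0, Nat.succ_pos n⟩) : S) : Lp ℂ 2 μ)
          = X.coeff i • E i := by
      intro i hi
      rw [Submodule.coe_smul, hpow i (Nat.lt_succ_iff.mp (Finset.mem_range.mp hi))]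
    apply Subtype.ext
    rw [Submodule.coe_add, Submodule.coe_zero, AddSubmonoidClass.coe_finset_sum,
      Finset.sum_congr rfl h3, Submodule.coe_smul, hc1, one_smul, hTn1]
    simp
  -- X is the characteristic polynomial of T
  have hXc : X = T.charpoly := by
    have hcpm : T.charpoly.Monic := LinearMap.charpoly_monic T
    have hcpd : T.charpoly.natDegree = n + 1 := by
      rw [LinearMap.charpoly_natDegree, hfin]
    set D : Polynomial ℂ := X - T.charpoly with hDdef
    have hDd : D.natDegree < n + 2 := by
      refine Nat.lt_succ_of_le ?_
      refine le_trans (natDegree_sub_le _ _) ?_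
      simp [hXdeg, hcpd]
    have hDcoeff_top : D.coeff (n + 1) = 0 := by
      rw [hDdef, coeff_sub, ← hXdeg, hXmonic.coeff_natDegree, hXdeg, ← hcpd,
        hcpm.coeff_natDegree, sub_self]
    have haevalD : (aeval T D) (e ⟨0, Nat.succ_pos n⟩) = 0 := by
      rw [hDdef, map_sub, LinearMap.sub_apply, haevalX,
        LinearMap.aeval_self_charpoly, LinearMap.zero_apply, sub_zero]
    have hsum0 : ∑ i : Fin (n + 1), D.coeff i • b i = 0 := by
      rw [hbe]
      have h1 : ∑ i : Fin (n + 1), D.coeff i • e i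
          = ∑ i ∈ Finset.range (n + 1), D.coeff i • (T ^ i) (e ⟨0, Nat.succ_pos n⟩) := by
        rw [← Fin.sum_univ_eq_sum_range fun i => D.coeff i • (T ^ i) (e ⟨0, Nat.succ_pos n⟩)]
        refine Finset.sum_congr rfl fun i _ => ?_
        congr 1
        apply Subtype.ext
        rw [hpow i (Nat.lt_succ_iff.mp i.2)]
      rw [h1]
      have h2 := haevalD
      rw [aeval_eq_sum_range' hDd, LinearMap.sum_apply] at h2
      simp only [LinearMap.smul_apply] at h2
      rw [Finset.sum_range_succ, hDcoeff_top, zero_smul, add_zero] at h2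
      exact h2
    have hcoeffzero : ∀ i : Fin (n + 1), D.coeff i = 0 := by
      have := linearIndependent_iff'.mp b.linearIndependent Finset.univ
        (fun i => D.coeff i) (by simpa using hsum0)
      intro i; exact this i (Finset.mem_univ i)
    have hD0 : D = 0 := by
      ext m
      rcases Nat.lt_or_ge m (n + 1) with h | h
      · simpa using hcoeffzero ⟨m, h⟩
      · rcases eq_or_lt_of_le h with h' | h'
        · rw [← h', hDcoeff_top, coeff_zero]
        · have hm : D.natDegree < m := by omega
          rw [coeff_eq_zero_of_natDegree_lt hm, coeff_zero]
    have := sub_eq_zero.mp hD0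
    exact this
  -- finish by matrix computation
  intro w
  set A : Matrix (Fin (n+1)) (Fin (n+1)) ℂ := LinearMap.toMatrix b b T with hAdef
  have hdet : LinearMap.det ((w • (LinearMap.id : S →ₗ[ℂ] S)) - T)
      = (w • (1 : Matrix (Fin (n+1)) (Fin (n+1)) ℂ) - A).det := by
    rw [← LinearMap.det_toMatrix b]
    congr 1
    rw [_root_.map_sub, _root_.map_smul, LinearMap.toMatrix_id]
  have hcharval : A.charpoly.eval w
      = (w • (1 : Matrix (Fin (n+1)) (Fin (n+1)) ℂ) - A).det := by
    have h1 : A.charpoly.eval w = (Polynomial.evalRingHom w) (Matrix.charmatrix A).det := rfl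
    rw [h1, RingHom.map_det]
    congr 1
    ext i j
    by_cases hij : i = j
    · subst hij
      simp [Matrix.charmatrix_apply_eq, Matrix.sub_apply, Matrix.smul_apply, Matrix.one_apply]
    · simp [Matrix.charmatrix_apply_ne _ _ _ hij, Matrix.sub_apply, Matrix.smul_apply,
        Matrix.one_apply, hij]
  rw [hdet, ← hcharval, LinearMap.charpoly_toMatrix, ← hXc]
end
end

section
/- Let $E \subset \partial\mathbb{D}$ be a finite union of disjoint closed arcs with complementary gaps $G_1, \dots, G_\ell$, and let $\tilde{T}_n$ be a restricted Chebyshev polynomial of degree $n$ for $E$: a monic polynomial of degree $n$ with all zeros on $\partial\mathbb{D}$ minimizing $\|P\|_E = \sup_{z \in E} |P(z)|$ among all such polynomials. Then $\tilde{T}_n$ has at most one zero in each gap $G_j$. -/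
open Complex Polynomial

noncomputable section

/-- The closed arc `{e^{iθ} : a ≤ θ ≤ b}` of the unit circle. -/
def arc (a b : ℝ) : Set ℂ := (fun θ : ℝ => Complex.exp (θ * Complex.I)) '' Set.Icc a b

private lemma cosLem19 {g x : ℝ} (hg : 0 ≤ g) (h1 : g < x) (h2 : x < 2 * Real.pi - g) :
    Real.cos x < Real.cos g := by
  rcases le_or_gt x Real.pi with hx | hx
  · exact Real.cos_lt_cos_of_nonneg_of_le_pi hg hx h1
  · have : Real.cos x = Real.cos (2 * Real.pi - x) := by rw [Real.cos_two_pi_sub]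
    rw [this]
    apply Real.cos_lt_cos_of_nonneg_of_le_pi hg
    · linarith [Real.pi_pos]
    · linarith

private lemma keyId19 (z q : ℂ) (g : ℝ) (hz : ‖z‖ = 1) (hq : ‖q‖ = 1) :
    ‖z - q * Complex.exp (-(g:ℂ) * I)‖ * ‖z - q * Complex.exp ((g:ℂ) * I)‖
    = 2 * |Real.cos g - (z * (starRingEnd ℂ) q).re| := by
  have hz0 : z ≠ 0 := by intro h; simp [h] at hz
  have hq0 : q ≠ 0 := by intro h; simp [h] at hq
  have hnz : Complex.normSq z = 1 := by rw [Complex.normSq_eq_norm_sq, hz]; norm_num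
  have hnq : Complex.normSq q = 1 := by rw [Complex.normSq_eq_norm_sq, hq]; norm_num
  have hcz : (starRingEnd ℂ) z = z⁻¹ := by
    apply eq_inv_of_mul_eq_one_left; rw [mul_comm, Complex.mul_conj, hnz]; norm_num
  have hcq : (starRingEnd ℂ) q = q⁻¹ := by
    apply eq_inv_of_mul_eq_one_left; rw [mul_comm, Complex.mul_conj, hnq]; norm_num
  have he0 : Complex.exp ((g:ℂ) * I) ≠ 0 := Complex.exp_ne_zero _
  set A := z - q * Complex.exp (-(g:ℂ) * I) with hA
  set B := z - q * Complex.exp ((g:ℂ) * I) with hB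
  have hconexp : (starRingEnd ℂ) (Complex.exp (-(g:ℂ) * I)) = Complex.exp ((g:ℂ) * I) := by
    rw [← Complex.exp_conj]; congr 1; simp
  have hconexp' : (starRingEnd ℂ) (Complex.exp ((g:ℂ) * I)) = Complex.exp (-(g:ℂ) * I) := by
    rw [← Complex.exp_conj]; congr 1; simp
  have hcC : ((z * (starRingEnd ℂ) q).re : ℂ)
      = (z * (starRingEnd ℂ) q + (starRingEnd ℂ) z * q) / 2 := by
    have h := Complex.add_conj (z * (starRingEnd ℂ) q)
    have h2 : (starRingEnd ℂ) (z * (starRingEnd ℂ) q) = (starRingEnd ℂ) z * q := by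
      rw [map_mul, Complex.conj_conj]
    rw [h2] at h
    push_cast at h
    linear_combination (-1/2 : ℂ) * h
  have hcosC : ((Real.cos g : ℝ) : ℂ) = (Complex.exp ((g:ℂ) * I) + Complex.exp (-(g:ℂ) * I)) / 2 := by
    rw [Complex.ofReal_cos]; simp [Complex.cos]
  have hC : (A * (starRingEnd ℂ) A) * (B * (starRingEnd ℂ) B)
      = 4 * (((Real.cos g : ℝ) : ℂ) - ((z * (starRingEnd ℂ) q).re : ℂ))^2 := by
    rw [hA, hB, hcC, hcosC]
    simp only [map_sub, map_mul, hconexp, hconexp', hcz, hcq]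
    rw [neg_mul, Complex.exp_neg]
    field_simp
    ring
  have hsqreal : (‖A‖ * ‖B‖)^2
      = (2 * |Real.cos g - (z * (starRingEnd ℂ) q).re|)^2 := by
    have e1 : (‖A‖ * ‖B‖)^2 = Complex.normSq A * Complex.normSq B := by
      rw [mul_pow, Complex.sq_norm, Complex.sq_norm]
    rw [e1]
    have hr : ((Complex.normSq A * Complex.normSq B : ℝ) : ℂ)
        = ((4 * (Real.cos g - (z * (starRingEnd ℂ) q).re)^2 : ℝ) : ℂ) := by
      push_cast
      rw [← Complex.mul_conj, ← Complex.mul_conj, hC]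
      push_cast; ring
    have := Complex.ofReal_inj.mp hr
    rw [this, mul_pow, _root_.sq_abs]; ring
  have h1 : 0 ≤ ‖A‖ * ‖B‖ := by positivity
  have h2 : (0:ℝ) ≤ 2 * |Real.cos g - (z * (starRingEnd ℂ) q).re| := by positivity
  have := (sq_eq_sq_iff_abs_eq_abs _ _).mp hsqreal
  rwa [_root_.abs_of_nonneg h1, _root_.abs_of_nonneg h2] at this

/-- angle coordinate based at `p` -/
private def uCoord19 (p z : ℂ) : ℝ := (-(z / p)).arg + Real.pi

private lemma uCoord19_spec {p z : ℂ} (hp : ‖p‖ = 1) (hz : ‖z‖ = 1) :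
    z = p * Complex.exp ((uCoord19 p z : ℝ) * I) := by
  have hp0 : p ≠ 0 := by intro h; simp [h] at hp
  have habs : ‖-(z / p)‖ = 1 := by
    rw [norm_neg, norm_div, hz, hp]; norm_num
  have h1 : Complex.exp (((-(z / p)).arg : ℝ) * I) = -(z / p) := by
    have := Complex.norm_mul_exp_arg_mul_I (-(z / p))
    rwa [habs, Complex.ofReal_one, one_mul] at this
  rw [uCoord19]
  push_cast
  rw [add_mul, Complex.exp_add, h1, Complex.exp_pi_mul_I]
  field_simp

private lemma uCoord19_lt {p z : ℂ} (hp : ‖p‖ = 1) (hz : ‖z‖ = 1)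
    (hzp : z ≠ p) : 0 < uCoord19 p z ∧ uCoord19 p z < 2 * Real.pi := by
  have hp0 : p ≠ 0 := by intro h; simp [h] at hp
  constructor
  · have := Complex.neg_pi_lt_arg (-(z / p))
    rw [uCoord19]; linarith
  · have hle := Complex.arg_le_pi (-(z / p))
    have hne : (-(z / p)).arg ≠ Real.pi := by
      intro h
      rw [Complex.arg_eq_pi_iff] at h
      obtain ⟨hre, him⟩ := h
      have h1 : (z / p).im = 0 := by simpa using him
      have h2 : 0 < (z / p).re := by simp at hre; linarith
      have habs : ‖z / p‖ = 1 := by rw [norm_div, hz, hp]; norm_num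
      have : (z / p).re = 1 := by
        have hn : Complex.normSq (z / p) = 1 := by rw [Complex.normSq_eq_norm_sq, habs]; norm_num
        rw [Complex.normSq_apply, h1] at hn
        nlinarith
      have : z / p = 1 := by
        apply Complex.ext <;> simp [this, h1]
      exact hzp (by field_simp at this; exact this)
    rw [uCoord19]
    have := lt_of_le_of_ne hle hne
    linarith

private lemma uCoord19_continuousAt {p z : ℂ} (hp : ‖p‖ = 1) (hz : ‖z‖ = 1)
    (hzp : z ≠ p) : ContinuousAt (uCoord19 p) z := by
  have hp0 : p ≠ 0 := by intro h; simp [h] at hp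
  have hslit : -(z / p) ∈ Complex.slitPlane := by
    rcases eq_or_ne (z / p).im 0 with him | him
    · left
      have habs : ‖z / p‖ = 1 := by rw [norm_div, hz, hp]; norm_num
      have hn : Complex.normSq (z / p) = 1 := by rw [Complex.normSq_eq_norm_sq, habs]; norm_num
      rw [Complex.normSq_apply, him] at hn
      have hcases : (z / p).re = 1 ∨ (z / p).re = -1 := by
        rcases mul_eq_zero.mp (show ((z/p).re - 1) * ((z/p).re + 1) = 0 by nlinarith) with h | h
        · left; linarith
        · right; linarith
      rcases hcases with h | h
      · exfalso
        apply hzp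
        have : z / p = 1 := Complex.ext (by simp [h]) (by simp [him])
        field_simp at this; exact this
      · simp [h]
    · right; simpa using him
  apply ContinuousAt.add _ continuousAt_const
  have hc : ContinuousAt (fun z : ℂ => -(z / p)) z :=
    (continuous_neg.comp (continuous_id.div_const p)).continuousAt
  exact ContinuousAt.comp (g := Complex.arg) (f := fun z : ℂ => -(z / p)) (x := z)
    (Complex.continuousAt_arg hslit) hc

open scoped Classical in
/-- Theorem 8.5(i): a restricted Chebyshev polynomial for a finite union `E` of
disjoint nondegenerate closed arcs (a monic polynomial of degree `n` with all zeros
on `∂𝔻` minimizing `sup_E |P|` among all such polynomials) has at most one zero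
(with multiplicity) in each gap, i.e., in each connected component of `∂𝔻 \ E`. -/
theorem stmt19 (n ℓ : ℕ) (hℓ : 1 ≤ ℓ) (a b : Fin ℓ → ℝ)
    (hab : ∀ j, a j < b j) (hlen : ∀ j, b j - a j < 2 * Real.pi)
    (hdisj : Pairwise fun j k => Disjoint (arc (a j) (b j)) (arc (a k) (b k)))
    (T : Polynomial ℂ) (hmonic : T.Monic) (hdeg : T.natDegree = n)
    (hTroots : ∀ z ∈ T.roots, ‖z‖ = 1)
    (hmin : ∀ P : Polynomial ℂ, P.Monic → P.natDegree = n →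
      (∀ z ∈ P.roots, ‖z‖ = 1) →
      sSup ((fun z => ‖T.eval z‖) '' ⋃ j, arc (a j) (b j))
        ≤ sSup ((fun z => ‖P.eval z‖) '' ⋃ j, arc (a j) (b j)))
    (z₀ : ℂ) (hz₀ : z₀ ∈ Metric.sphere (0 : ℂ) 1 \ ⋃ j, arc (a j) (b j)) :
    (T.roots.filter (fun w =>
      w ∈ connectedComponentIn (Metric.sphere (0 : ℂ) 1 \ ⋃ j, arc (a j) (b j)) z₀)).card
      ≤ 1 := by
  by_contra hcon
  push_neg at hcon
  set E : Set ℂ := ⋃ j, arc (a j) (b j) with hEdef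
  set S : Set ℂ := Metric.sphere (0 : ℂ) 1 \ E with hSdef
  set Cset : Set ℂ := connectedComponentIn S z₀ with hCdef
  -- basic facts about E
  have habsE : ∀ z ∈ E, ‖z‖ = 1 := by
    intro z hz
    rw [hEdef, Set.mem_iUnion] at hz
    obtain ⟨j, θ, hθ, rfl⟩ := hz
    simpa using Complex.norm_exp_ofReal_mul_I θ
  have hCsubS : Cset ⊆ S := connectedComponentIn_subset _ _
  have habsC : ∀ z ∈ Cset, ‖z‖ = 1 := by
    intro z hz
    have := (hCsubS hz).1
    simpa [Complex.dist_eq] using this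
  have hCE : ∀ z ∈ Cset, z ∉ E := fun z hz => (hCsubS hz).2
  -- the base point p
  set j₀ : Fin ℓ := ⟨0, hℓ⟩ with hj₀
  set p : ℂ := Complex.exp ((a j₀ : ℝ) * I) with hpdef
  have hpE : p ∈ E := by
    rw [hEdef, Set.mem_iUnion]
    exact ⟨j₀, ⟨a j₀, ⟨le_rfl, (hab j₀).le⟩, rfl⟩⟩
  have hpabs : ‖p‖ = 1 := by
    rw [hpdef]; exact Complex.norm_exp_ofReal_mul_I (a j₀)
  have hpC : p ∉ Cset := fun h => hCE p h hpE
  have hp0 : p ≠ 0 := by intro h; simp [h] at hpabs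
  -- E is compact, nonempty, infinite
  have hEcomp : IsCompact E := by
    rw [hEdef]
    apply isCompact_iUnion
    intro j
    exact isCompact_Icc.image (Complex.continuous_exp.comp
      (Complex.continuous_ofReal.mul continuous_const))
  have hEne : E.Nonempty := ⟨p, hpE⟩
  have hEinf : E.Infinite := by
    apply Set.Infinite.mono (Set.subset_iUnion (fun j => arc (a j) (b j)) j₀)
    apply Set.Infinite.image _ (Set.Icc_infinite (hab j₀))
    intro θ₁ hθ₁ θ₂ hθ₂ h
    simp only at h
    rw [Complex.exp_eq_exp_iff_exists_int] at h
    obtain ⟨k, hk⟩ := h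
    have him : θ₁ = θ₂ + k * (2 * Real.pi) := by
      have := congrArg Complex.im hk
      simpa [Complex.mul_im, Complex.mul_re] using this
    have hπ := Real.pi_pos
    have hb : b j₀ - a j₀ < 2 * Real.pi := hlen j₀
    obtain ⟨h1, h2⟩ := hθ₁; obtain ⟨h3, h4⟩ := hθ₂
    have hk1 : (k : ℝ) < 1 := by nlinarith
    have hk2 : (-1 : ℝ) < k := by nlinarith
    have hk1' : k < 1 := by exact_mod_cast hk1
    have hk2' : -1 < k := by exact_mod_cast hk2
    have hk0 : k = 0 := by omega
    rw [hk0] at him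
    simpa using him
  -- extract two roots in Cset
  set M := T.roots.filter (fun w => w ∈ Cset) with hMdef
  have hM2 : 2 ≤ M.card := hcon
  obtain ⟨w₁, hw₁⟩ := Multiset.exists_mem_of_ne_zero
    (show M ≠ 0 by intro h; rw [h] at hM2; simp at hM2)
  have hw₁root : w₁ ∈ T.roots := (Multiset.mem_filter.mp hw₁).1
  have hw₁C : w₁ ∈ Cset := (Multiset.mem_filter.mp hw₁).2
  obtain ⟨w₂, hw₂⟩ := Multiset.exists_mem_of_ne_zero
    (show M.erase w₁ ≠ 0 by
      have h0 : Multiset.card (M.erase w₁) = Multiset.card M - 1 := by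
        rw [Multiset.card_erase_of_mem hw₁, Nat.pred_eq_sub_one]
      intro h
      rw [h] at h0
      simp at h0
      omega)
  have hw₂M : w₂ ∈ M := Multiset.mem_of_mem_erase hw₂
  have hw₂C : w₂ ∈ Cset := (Multiset.mem_filter.mp hw₂M).2
  have hw₂er : w₂ ∈ T.roots.erase w₁ :=
    Multiset.mem_of_le (Multiset.erase_le_erase w₁ (Multiset.filter_le _ _)) hw₂
  set rest := (T.roots.erase w₁).erase w₂ with hrestdef
  have hroots : T.roots = w₁ ::ₘ w₂ ::ₘ rest := by
    rw [hrestdef, Multiset.cons_erase hw₂er, Multiset.cons_erase hw₁root]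
  have hrest1 : ∀ r ∈ rest, ‖r‖ = 1 := by
    intro r hr
    have : r ∈ T.roots := Multiset.mem_of_mem_erase (Multiset.mem_of_mem_erase hr)
    simpa using hTroots r this
  -- the main symmetric argument
  have main : ∀ v₁ v₂ : ℂ, v₁ ∈ Cset → v₂ ∈ Cset →
      T.roots = v₁ ::ₘ v₂ ::ₘ rest → uCoord19 p v₁ ≤ uCoord19 p v₂ → False := by
    intro v₁ v₂ hv₁C hv₂C hroots hle
    have hv₁p : v₁ ≠ p := fun h => hpC (h ▸ hv₁C)
    have hv₂p : v₂ ≠ p := fun h => hpC (h ▸ hv₂C)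
    have habsv₁ : ‖v₁‖ = 1 := habsC v₁ hv₁C
    have habsv₂ : ‖v₂‖ = 1 := habsC v₂ hv₂C
    set s₀ := uCoord19 p v₁ with hs₀
    set t₀ := uCoord19 p v₂ with ht₀
    obtain ⟨hs₀pos, hs₀lt⟩ := uCoord19_lt hpabs habsv₁ hv₁p
    obtain ⟨ht₀pos, ht₀lt⟩ := uCoord19_lt hpabs habsv₂ hv₂p
    set m := (s₀ + t₀) / 2 with hm
    set g := (t₀ - s₀) / 2 with hg
    have hπ := Real.pi_pos
    have hmg1 : m - g = s₀ := by rw [hm, hg]; ring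
    have hmg2 : m + g = t₀ := by rw [hm, hg]; ring
    have hg0 : 0 ≤ g := by rw [hg]; linarith
    have hgπ : g < Real.pi := by rw [hg]; linarith
    set q : ℂ := p * Complex.exp ((m : ℝ) * I) with hq
    have habsq : ‖q‖ = 1 := by
      rw [hq, norm_mul, hpabs, Complex.norm_exp_ofReal_mul_I]; norm_num
    have hq0 : q ≠ 0 := by intro h; simp [h] at habsq
    have hv₁eq : v₁ = q * Complex.exp (-(g:ℂ) * I) := by
      have e1 := uCoord19_spec hpabs habsv₁
      rw [← hs₀] at e1
      rw [e1, hq]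
      conv_rhs => rw [mul_assoc, ← Complex.exp_add]
      rw [show ((m:ℂ) * I + -(g:ℂ) * I) = ((s₀ : ℝ) : ℂ) * I from by
        rw [← hmg1]; push_cast; ring]
    have hv₂eq : v₂ = q * Complex.exp ((g:ℂ) * I) := by
      have e1 := uCoord19_spec hpabs habsv₂
      rw [← ht₀] at e1
      rw [e1, hq]
      conv_rhs => rw [mul_assoc, ← Complex.exp_add]
      rw [show ((m:ℂ) * I + (g:ℂ) * I) = ((t₀ : ℝ) : ℂ) * I from by
        rw [← hmg2]; push_cast; ring]
    -- the image of the gap component under the angle coordinate is order-connected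
    have hJ : (uCoord19 p '' Cset).OrdConnected := by
      apply IsPreconnected.ordConnected
      apply IsPreconnected.image
      · rw [hCdef]; exact isPreconnected_connectedComponentIn
      · intro w hw
        exact (uCoord19_continuousAt hpabs (habsC w hw) (fun h => hpC (h ▸ hw))).continuousWithinAt
    have hIcc : Set.Icc s₀ t₀ ⊆ uCoord19 p '' Cset :=
      hJ.out ⟨v₁, hv₁C, hs₀.symm⟩ ⟨v₂, hv₂C, ht₀.symm⟩
    -- the key bound on E
    have hcbound : ∀ z ∈ E, (z * (starRingEnd ℂ) q).re < Real.cos g := by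
      intro z hz
      have habsz := habsE z hz
      obtain ⟨θ, hzθ, hθ0, hθ2π, hθout⟩ :
          ∃ θ : ℝ, z = p * Complex.exp ((θ:ℝ) * I) ∧ 0 ≤ θ ∧ θ < 2*Real.pi ∧ (θ < s₀ ∨ t₀ < θ) := by
        by_cases hzp : z = p
        · exact ⟨0, by simp [hzp], le_rfl, by linarith, Or.inl hs₀pos⟩
        · refine ⟨uCoord19 p z, uCoord19_spec hpabs habsz, ?_, ?_, ?_⟩
          · exact (uCoord19_lt hpabs habsz hzp).1.le
          · exact (uCoord19_lt hpabs habsz hzp).2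
          · by_contra hcon2
            push_neg at hcon2
            obtain ⟨w, hwC, hwu⟩ := hIcc ⟨hcon2.1, hcon2.2⟩
            have hzw : z = w := by
              have e2 := uCoord19_spec hpabs (habsC w hwC)
              rw [hwu] at e2
              exact (uCoord19_spec hpabs habsz).trans e2.symm
            exact hCE z (by rw [hzw]; exact hwC) hz
      have hcz : (z * (starRingEnd ℂ) q).re = Real.cos (θ - m) := by
        have hpp : p * (starRingEnd ℂ) p = 1 := by
          rw [Complex.mul_conj]
          norm_cast
          rw [Complex.normSq_eq_norm_sq, hpabs]; norm_num
        have hconm : (starRingEnd ℂ) (Complex.exp ((m:ℝ) * I)) = Complex.exp (-(m:ℂ) * I) := by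
          rw [← Complex.exp_conj]; congr 1; simp
        rw [hzθ, hq, map_mul, hconm]
        rw [show p * Complex.exp ((θ:ℝ)*I) * ((starRingEnd ℂ) p * Complex.exp (-(m:ℂ)*I))
            = (p * (starRingEnd ℂ) p) * (Complex.exp ((θ:ℂ)*I) * Complex.exp (-(m:ℂ)*I)) from by
          push_cast; ring]
        rw [hpp, one_mul, ← Complex.exp_add]
        rw [show ((θ:ℂ)*I + -(m:ℂ)*I) = ((θ - m : ℝ) : ℂ) * I from by push_cast; ring]
        exact Complex.exp_ofReal_mul_I_re _
      rw [hcz]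
      rcases hθout with h | h
      · rw [show θ - m = -(m - θ) from by ring, Real.cos_neg]
        apply cosLem19 hg0
        · linarith
        · linarith
      · apply cosLem19 hg0
        · linarith
        · linarith
    -- maximize the linear functional on E
    have hccont : Continuous (fun z : ℂ => (z * (starRingEnd ℂ) q).re) :=
      Complex.continuous_re.comp (continuous_id.mul continuous_const)
    obtain ⟨z₁, hz₁E, hz₁max⟩ := hEcomp.exists_isMaxOn hEne hccont.continuousOn
    have hz₁lt : (z₁ * (starRingEnd ℂ) q).re < Real.cos g := hcbound z₁ hz₁E
    -- choose the widened half-gap g'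
    obtain ⟨ε, hεpos, hball⟩ := Metric.continuousAt_iff.mp
      (Real.continuous_cos.continuousAt (x := g)) (Real.cos g - (z₁ * (starRingEnd ℂ) q).re)
      (by linarith)
    set g' := min (g + ε/2) Real.pi with hg'
    have hgg' : g < g' := lt_min (by linarith) hgπ
    have hg'π : g' ≤ Real.pi := min_le_right _ _
    have hcos1 : Real.cos g' < Real.cos g := Real.cos_lt_cos_of_nonneg_of_le_pi hg0 hg'π hgg'
    have hcos2 : (z₁ * (starRingEnd ℂ) q).re < Real.cos g' := by
      have hdist : dist g' g < ε := by
        rw [Real.dist_eq, _root_.abs_of_nonneg (by linarith : (0:ℝ) ≤ g' - g)]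
        have : g' ≤ g + ε/2 := min_le_left _ _
        linarith
      have h2 := hball hdist
      rw [Real.dist_eq] at h2
      have h3 := abs_lt.mp h2
      linarith [h3.1]
    -- the competing polynomial
    set v₁' := q * Complex.exp (-(g':ℂ) * I) with hv₁'
    set v₂' := q * Complex.exp ((g':ℂ) * I) with hv₂'
    have hsplits : T.Splits := IsAlgClosed.splits T
    have hTeq : T = ((v₁ ::ₘ v₂ ::ₘ rest).map fun w => X - C w).prod := by
      conv_lhs => rw [hsplits.eq_prod_roots_of_monic hmonic]
      rw [hroots]
    have hcardroots : Multiset.card T.roots = n := by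
      rw [← hdeg]; exact Polynomial.splits_iff_card_roots.mp hsplits
    set P := ((v₁' ::ₘ v₂' ::ₘ rest).map fun w => X - C w).prod with hP
    have hPmonic : P.Monic :=
      Polynomial.monic_multiset_prod_of_monic _ _ (fun r _ => Polynomial.monic_X_sub_C r)
    have hProots : P.roots = v₁' ::ₘ v₂' ::ₘ rest := Polynomial.roots_multiset_prod_X_sub_C _
    have hPdeg : P.natDegree = n := by
      rw [hP, Polynomial.natDegree_multiset_prod_X_sub_C_eq_card]
      rw [hroots] at hcardroots
      simpa using hcardroots
    have habsv₁' : ‖v₁'‖ = 1 := by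
      rw [hv₁', norm_mul, habsq, one_mul,
        show (-(g':ℂ) * I) = ((-g' : ℝ) : ℂ) * I from by push_cast; ring]
      exact Complex.norm_exp_ofReal_mul_I _
    have habsv₂' : ‖v₂'‖ = 1 := by
      rw [hv₂', norm_mul, habsq, one_mul]
      exact Complex.norm_exp_ofReal_mul_I _
    have hPnorm : ∀ z ∈ P.roots, ‖z‖ = 1 := by
      rw [hProots]
      intro z hz
      rcases Multiset.mem_cons.mp hz with h | h
      · rw [h]; exact habsv₁'
      rcases Multiset.mem_cons.mp h with h | h
      · rw [h]; exact habsv₂'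
      · exact hrest1 z h
    -- evaluation formulas
    set R : ℂ → ℝ := fun z => ‖(rest.map fun w => z - w).prod‖ with hR
    have hevalTc : ∀ z : ℂ, T.eval z = (z - v₁) * ((z - v₂) * (rest.map fun w => z - w).prod) := by
      intro z
      conv_lhs => rw [hTeq]
      rw [Polynomial.eval_multiset_prod, Multiset.map_map]
      simp [Multiset.prod_cons, Function.comp]
    have hevalPc : ∀ z : ℂ, P.eval z = (z - v₁') * ((z - v₂') * (rest.map fun w => z - w).prod) := by
      intro z
      conv_lhs => rw [hP]
      rw [Polynomial.eval_multiset_prod, Multiset.map_map]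
      simp [Multiset.prod_cons, Function.comp]
    have hevalT : ∀ z : ℂ, ‖T.eval z‖
        = (‖z - v₁‖ * ‖z - v₂‖) * R z := by
      intro z; rw [hevalTc z, norm_mul, norm_mul, hR]; ring
    have hevalP : ∀ z : ℂ, ‖P.eval z‖
        = (‖z - v₁'‖ * ‖z - v₂'‖) * R z := by
      intro z; rw [hevalPc z, norm_mul, norm_mul, hR]; ring
    have hRnonneg : ∀ z : ℂ, 0 ≤ R z := fun z => norm_nonneg _
    -- pointwise strict decrease of the quadratic factor on E
    have hpoint : ∀ z ∈ E, ‖z - v₁'‖ * ‖z - v₂'‖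
        < ‖z - v₁‖ * ‖z - v₂‖ := by
      intro z hz
      have habsz := habsE z hz
      have hc1 : (z * (starRingEnd ℂ) q).re < Real.cos g := hcbound z hz
      have hc2 : (z * (starRingEnd ℂ) q).re < Real.cos g' :=
        lt_of_le_of_lt (hz₁max hz) hcos2
      rw [hv₁', hv₂', keyId19 z q g' habsz habsq]
      rw [hv₁eq, hv₂eq, keyId19 z q g habsz habsq]
      rw [abs_of_pos (by linarith), abs_of_pos (by linarith)]
      linarith
    -- sup comparison
    have hfP : ContinuousOn (fun z => ‖P.eval z‖) E :=
      (continuous_norm.comp P.continuous).continuousOn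
    have hfT : ContinuousOn (fun z => ‖T.eval z‖) E :=
      (continuous_norm.comp T.continuous).continuousOn
    obtain ⟨zP, hzPE, hzPmax⟩ := hEcomp.exists_isMaxOn hEne hfP
    obtain ⟨zT, hzTE, hzTmax⟩ := hEcomp.exists_isMaxOn hEne hfT
    have hbddP : BddAbove ((fun z => ‖P.eval z‖) '' E) :=
      ⟨‖P.eval zP‖, by rintro _ ⟨w, hw, rfl⟩; exact hzPmax hw⟩
    have hbddT : BddAbove ((fun z => ‖T.eval z‖) '' E) :=
      ⟨‖T.eval zT‖, by rintro _ ⟨w, hw, rfl⟩; exact hzTmax hw⟩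
    have hsupP : sSup ((fun z => ‖P.eval z‖) '' E) = ‖P.eval zP‖ :=
      le_antisymm (csSup_le (hEne.image _) (by rintro _ ⟨w, hw, rfl⟩; exact hzPmax hw))
        (le_csSup hbddP ⟨zP, hzPE, rfl⟩)
    have hsupT : sSup ((fun z => ‖T.eval z‖) '' E) = ‖T.eval zT‖ :=
      le_antisymm (csSup_le (hEne.image _) (by rintro _ ⟨w, hw, rfl⟩; exact hzTmax hw))
        (le_csSup hbddT ⟨zT, hzTE, rfl⟩)
    have hminP := hmin P hPmonic hPdeg hPnorm
    rw [hsupP, hsupT] at hminP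
    rcases eq_or_lt_of_le (norm_nonneg (P.eval zP)) with h0 | h0
    · -- sup of |P| is 0, hence |T| vanishes on all of E, hence T = 0, contradiction
      have hTz : ∀ z ∈ E, T.IsRoot z := by
        intro z hz
        have h1 : ‖T.eval z‖ ≤ ‖T.eval zT‖ := hzTmax hz
        have h2 : ‖T.eval z‖ ≤ 0 := by rw [← h0] at hminP; linarith
        have h3 : ‖T.eval z‖ = 0 :=
          le_antisymm h2 (norm_nonneg _)
        exact norm_eq_zero.mp h3
      have hT0 : T = 0 :=
        Polynomial.eq_zero_of_infinite_isRoot T (Set.Infinite.mono (fun z hz => hTz z hz) hEinf)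
      exact hmonic.ne_zero hT0
    · have hRpos : 0 < R zP := by
        rcases (hRnonneg zP).lt_or_eq with h | h
        · exact h
        · exfalso
          rw [hevalP zP, ← h, mul_zero] at h0
          exact lt_irrefl 0 h0
      have hlt : ‖P.eval zP‖ < ‖T.eval zP‖ := by
        rw [hevalP zP, hevalT zP]
        exact mul_lt_mul_of_pos_right (hpoint zP hzPE) hRpos
      have hle2 : ‖T.eval zP‖ ≤ ‖T.eval zT‖ := hzTmax hzPE
      linarith
  rcases le_total (uCoord19 p w₁) (uCoord19 p w₂) with h | h
  · exact main w₁ w₂ hw₁C hw₂C hroots h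
  · exact main w₂ w₁ hw₂C hw₁C (by rw [hroots, Multiset.cons_swap]) h
end
end
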